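/- For sl_2, the normalized q-characters R_{k,a} = m_{k,a}^{-1} χ_q(W_{k,a}), viewed as polynomials in the variables A_b^{-1}, satisfy: R_{k+1, aq^{-2(k+1)}} = 1 + Σ_{k'=0}^{k} A_{aq^{-2k'-1}}^{-1} A_{aq^{-2k'+1}}^{-1} ··· A_{aq^{-1}}^{-1}, and consequently the sequence R_{k, aq^{-2k}} converges as k → ∞ to the formal power series 1 + Σ_{k'≥0} A_{aq^{-2k'-1}}^{-1}A_{aq^{-2k'+1}}^{-1}···A_{aq^{-1}}^{-1} in ℤ[[A_{aq^m}^{-1}]]_{m∈ℤ} (in the sense that coefficients stabilize). -/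

import Mathlib

noncomputable section

/-- Laurent monomials in the variables `Y_b`, `b ∈ ℂˣ`, written additively:
a monomial is its finitely supported exponent function. -/
abbrev Mon : Type := ℂˣ →₀ ℤ

/-- The Laurent polynomial ring `ℤ[Y_b^±]`. -/
abbrev Rng : Type := AddMonoidAlgebra ℤ Mon

/-- The variable `Y_b` as a monomial. -/
def Y (b : ℂˣ) : Mon := Finsupp.single b 1

/-- A monomial viewed as an element of the Laurent polynomial ring. -/
def X (m : Mon) : Rng := AddMonoidAlgebra.single m 1

/-- The monomial `A_b = Y_{bq⁻¹} Y_{bq}` (sl₂ case). -/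
def Amon (q b : ℂˣ) : Mon := Y (b * q⁻¹) + Y (b * q)

/-- The highest weight monomial `m_{k,a} = Y_a Y_{aq²} ⋯ Y_{aq^{2(k-1)}}`. -/
def mka (q : ℂˣ) (k : ℕ) (a : ℂˣ) : Mon := ∑ s ∈ Finset.range k, Y (a * q ^ (2 * s))

/-- The normalized q-character of the sl₂ Kirillov-Reshetikhin module, given by the
nested formula `1 + A_{aq^{2k-1}}⁻¹(1 + A_{aq^{2k-3}}⁻¹(1 + ⋯ (1 + A_{aq}⁻¹)⋯))`. -/
def Nchi (q : ℂˣ) : ℕ → ℂˣ → Rng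
  | 0, _ => 1
  | (k+1), a => 1 + X (-(Amon q (a * q ^ (2 * k + 1)))) * Nchi q k a

/-- The q-character `χ_q(W_{k,a}) = m_{k,a}(1 + A_{aq^{2k-1}}⁻¹(1 + ⋯ (1 + A_{aq}⁻¹)⋯))`. -/
def chiW (q : ℂˣ) (k : ℕ) (a : ℂˣ) : Rng := X (mka q k a) * Nchi q k a

/-- A monomial `m ≠ 1` is right-negative if for each `a`, at the maximal `q`-power shift
`L` where `m` is supported on `a q^L`, the exponent is negative. -/
def RightNeg (q : ℂˣ) (m : Mon) : Prop :=
  m ≠ 0 ∧ ∀ (a : ℂˣ) (L : ℤ), m (a * q ^ L) ≠ 0 →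
    (∀ l : ℤ, L < l → m (a * q ^ l) = 0) → m (a * q ^ L) < 0

/-- A monomial is dominant if all its exponents are nonnegative. -/
def Dominant (m : Mon) : Prop := ∀ b, 0 ≤ m b

lemma X_mul (m n : Mon) : X m * X n = X (m + n) := by
  simp [X, AddMonoidAlgebra.single_mul_single]

lemma pow_shift (a q : ℂˣ) (s t u : ℤ) (h : s + t = u) :
    a * q ^ s * q ^ t = a * q ^ u := by
  rw [mul_assoc, ← zpow_add, h]

/-- Key identity, proved by induction. -/
lemma key (q a : ℂˣ) (k : ℕ) : Nchi q k (a * q ^ (-2 * (k : ℤ))) =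
    1 + ∑ k' ∈ Finset.range k,
      X (- ∑ j ∈ Finset.range (k' + 1), Amon q (a * q ^ (-2 * (j : ℤ) - 1))) := by
  induction k generalizing a with
  | zero => simp [Nchi]
  | succ k ih =>
    have hb : a * q ^ (-2 * ((k : ℤ) + 1)) = a * q ^ (-2 : ℤ) * q ^ (-2 * (k : ℤ)) :=
      (pow_shift a q (-2) (-2 * (k : ℤ)) _ (by ring)).symm
    have hcast : (-2 * (((k : ℕ) + 1 : ℕ) : ℤ)) = -2 * ((k : ℤ) + 1) := by push_cast; ring
    have h1 : a * q ^ (-2 * ((k : ℤ) + 1)) * q ^ ((2 * k + 1 : ℕ)) = a * q ^ (-1 : ℤ) := by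
      rw [← zpow_natCast q (2 * k + 1)]
      exact pow_shift a q _ _ _ (by push_cast; ring)
    show (1 : Rng) + X (-(Amon q (a * q ^ (-2 * (((k : ℕ) + 1 : ℕ) : ℤ)) * q ^ (2 * k + 1))))
        * Nchi q k (a * q ^ (-2 * (((k : ℕ) + 1 : ℕ) : ℤ))) = _
    rw [hcast, h1, hb, ih (a * q ^ (-2 : ℤ))]
    rw [Finset.sum_range_succ']
    have h0 : X (- ∑ j ∈ Finset.range (0 + 1), Amon q (a * q ^ (-2 * (j : ℤ) - 1)))
        = X (-(Amon q (a * q ^ (-1 : ℤ)))) := by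
      norm_num
    rw [h0, mul_add, mul_one, Finset.mul_sum]
    have hterm : ∀ k' ∈ Finset.range k,
        X (-(Amon q (a * q ^ (-1 : ℤ)))) *
          X (- ∑ j ∈ Finset.range (k' + 1), Amon q (a * q ^ (-2 : ℤ) * q ^ (-2 * (j : ℤ) - 1)))
        = X (- ∑ j ∈ Finset.range (k' + 1 + 1), Amon q (a * q ^ (-2 * (j : ℤ) - 1))) := by
      intro k' _
      rw [X_mul]
      congr 1
      have e : ∀ j ∈ Finset.range (k' + 1),
          Amon q (a * q ^ (-2 : ℤ) * q ^ (-2 * (j : ℤ) - 1))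
          = Amon q (a * q ^ (-2 * (((j : ℕ) + 1 : ℕ) : ℤ) - 1)) := by
        intro j _
        rw [pow_shift a q (-2) (-2 * (j : ℤ) - 1)
          (-2 * (((j : ℕ) + 1 : ℕ) : ℤ) - 1) (by push_cast; ring)]
      conv_rhs => rw [Finset.sum_range_succ']
      rw [Finset.sum_congr rfl e]
      have h00 : a * q ^ (-2 * ((0 : ℕ) : ℤ) - 1) = a * q ^ (-1 : ℤ) := by norm_num
      rw [h00]
      abel
    rw [Finset.sum_congr rfl hterm]
    abel

theorem kr_sl2_asymptotic (q : ℂˣ) (hq : ∀ n : ℤ, n ≠ 0 → q ^ n ≠ 1) (a : ℂˣ) :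
    (∀ k : ℕ, Nchi q (k + 1) (a * q ^ (-2 * ((k : ℤ) + 1))) =
        1 + ∑ k' ∈ Finset.range (k + 1),
          X (- ∑ j ∈ Finset.range (k' + 1), Amon q (a * q ^ (-2 * (j : ℤ) - 1)))) ∧
      ∀ m : Mon, ∃ (N : ℕ) (c : ℤ), ∀ k ≥ N,
        (Nchi q (k + 1) (a * q ^ (-2 * ((k : ℤ) + 1)))).coeff m = c := by
  have hpow : ∀ s t : ℤ, q ^ s = q ^ t → s = t := by
    intro s t h
    by_contra hne
    exact hq (s - t) (sub_ne_zero.2 hne) (by rw [zpow_sub, h, mul_inv_cancel])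
  have hinj : ∀ s t : ℤ, a * q ^ s = a * q ^ t → s = t := fun s t h =>
    hpow s t (mul_left_cancel h)
  have hkey : ∀ k : ℕ, Nchi q (k + 1) (a * q ^ (-2 * ((k : ℤ) + 1))) =
      1 + ∑ k' ∈ Finset.range (k + 1),
        X (- ∑ j ∈ Finset.range (k' + 1), Amon q (a * q ^ (-2 * (j : ℤ) - 1))) := by
    intro k
    have := key q a (k + 1)
    have hcast : (-2 * (((k : ℕ) + 1 : ℕ) : ℤ)) = -2 * ((k : ℤ) + 1) := by push_cast; ring
    rwa [hcast] at this
  refine ⟨hkey, ?_⟩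
  intro m
  set M : ℕ → Mon := fun k' =>
    - ∑ j ∈ Finset.range (k' + 1), Amon q (a * q ^ (-2 * (j : ℤ) - 1)) with hM
  set p : ℕ → ℂˣ := fun k' => a * q ^ (-2 * (k' : ℤ) - 2) with hp
  -- M k' evaluated at p k' is -1
  have hAmon : ∀ s : ℤ, Amon q (a * q ^ s) = Y (a * q ^ (s - 1)) + Y (a * q ^ (s + 1)) := by
    intro s
    rw [Amon]
    congr 2
    · rw [mul_assoc, ← zpow_sub_one]
    · rw [mul_assoc, ← zpow_add_one]
  have hMp : ∀ k' : ℕ, M k' (p k') = -1 := by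
    intro k'
    rw [hM]
    simp only [Finsupp.neg_apply, Finsupp.finset_sum_apply]
    have : ∀ j ∈ Finset.range (k' + 1),
        Amon q (a * q ^ (-2 * (j : ℤ) - 1)) (p k') = if j = k' then 1 else 0 := by
      intro j hj
      have hjlt : j < k' + 1 := Finset.mem_range.mp hj
      rw [hAmon, Finsupp.add_apply, Y, Y, hp]
      simp only [Finsupp.single_apply]
      have e1 : (a * q ^ (-2 * (j : ℤ) - 1 - 1) = a * q ^ (-2 * (k' : ℤ) - 2)) ↔ j = k' := by
        constructor
        · intro h
          have := hinj _ _ h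
          omega
        · rintro rfl; congr 1; ring
      have e2 : ¬ (a * q ^ (-2 * (j : ℤ) - 1 + 1) = a * q ^ (-2 * (k' : ℤ) - 2)) := by
        intro h
        have := hinj _ _ h
        omega
      rw [if_neg e2]
      by_cases h : j = k'
      · rw [if_pos (e1.2 h), if_pos h]; ring
      · rw [if_neg (fun hh => h (e1.1 hh)), if_neg h]; ring
    rw [Finset.sum_congr rfl this, Finset.sum_ite_eq' (Finset.range (k' + 1)) k']
    simp
  -- injectivity of p and finiteness of the bad set
  have hpinj : Function.Injective p := by
    intro s t h
    have := hinj _ _ h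
    omega
  have hfin : {k' : ℕ | m (p k') ≠ 0}.Finite := by
    have : {k' : ℕ | m (p k') ≠ 0} ⊆ p ⁻¹' ↑m.support := by
      intro x hx
      simp only [Set.mem_setOf_eq] at hx
      simpa [Finsupp.mem_support_iff] using hx
    exact (m.support.finite_toSet.preimage hpinj.injOn).subset this
  obtain ⟨N, hN⟩ := hfin.bddAbove
  have hzero : ∀ k' : ℕ, N + 1 ≤ k' → m (p k') = 0 := by
    intro k' hk'
    by_contra h
    have := hN h
    omega
  have hMne : ∀ k' : ℕ, N + 1 ≤ k' → M k' ≠ m := by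
    intro k' hk' h
    have h1 := hMp k'
    rw [h, hzero k' hk'] at h1
    exact absurd h1 (by norm_num)
  refine ⟨N + 1, (1 : Rng).coeff m + ∑ k' ∈ Finset.range (N + 1), (X (M k')).coeff m, ?_⟩
  intro k hk
  rw [hkey k, AddMonoidAlgebra.coeff_add, AddMonoidAlgebra.coeff_sum, Finsupp.add_apply, Finsupp.finset_sum_apply]
  congr 1
  refine (Finset.sum_subset (Finset.range_subset_range.2 (by omega)) ?_).symm
  intro x hx hxn
  simp only [Finset.mem_range] at hx hxn
  have : M x ≠ m := hMne x (by omega)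
  rw [X, AddMonoidAlgebra.coeff_single]
  exact Finsupp.single_eq_of_ne' this
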